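/- The supremum over a, b ∈ ℝ (not both zero) of (2|a|^{3/2} + 2|b|^{3/2})^{2/3} / ‖ax³ + bx²y + bxy² + ay³‖, where ‖·‖ is the sup norm on [−1,1]², equals (2 + 2|b₁|^{3/2})^{2/3}/(2|1 + b₁|) with b₁ = (3/7)(3 − 2·9^{1/3}/(−12+7√3)^{1/3} + 2(−36+21√3)^{1/3}), and this value lies in (2.55, 2.56). -/

import Mathlib

/-- Supremum of `|a x³ + b x² y + b x y² + a y³|` over the unit square `[-1,1]²`. -/
noncomputable def supCubic (a b : ℝ) : ℝ :=
  sSup {r : ℝ | ∃ x y : ℝ, |x| ≤ 1 ∧ |y| ≤ 1 ∧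
    r = |a * x^3 + b * x^2 * y + b * x * y^2 + a * y^3|}

noncomputable def b₁ : ℝ :=
  (3/7) * (3 - 2 * (9:ℝ) ^ ((1:ℝ)/3) / (-12 + 7 * Real.sqrt 3) ^ ((1:ℝ)/3)
      + 2 * (-36 + 21 * Real.sqrt 3) ^ ((1:ℝ)/3))

noncomputable def ww : ℝ := (-36 + 21 * Real.sqrt 3) ^ ((1:ℝ)/3)

lemma hs3 : Real.sqrt 3 ^ 2 = 3 := Real.sq_sqrt (by norm_num)

lemma hs3lo : 1.7320 < Real.sqrt 3 := by nlinarith [hs3, Real.sqrt_nonneg 3]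

lemma hXpos : (0:ℝ) < -36 + 21 * Real.sqrt 3 := by nlinarith [hs3lo]

lemma hYpos : (0:ℝ) < -12 + 7 * Real.sqrt 3 := by nlinarith [hs3lo]

lemma hwpos : 0 < ww := Real.rpow_pos_of_pos hXpos _

lemma hw3 : ww ^ 3 = -36 + 21 * Real.sqrt 3 := by
  rw [ww, ← Real.rpow_natCast (((-36 + 21 * Real.sqrt 3):ℝ) ^ ((1:ℝ)/3)) 3,
    ← Real.rpow_mul hXpos.le]
  norm_num

lemma hb1w : b₁ = 3/7 * (3 - 6/ww + 2*ww) := by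
  have h9 : (9:ℝ) ^ ((1:ℝ)/3) = (3:ℝ) ^ ((2:ℝ)/3) := by
    rw [show (9:ℝ) = (3:ℝ)^(2:ℕ) by norm_num, ← Real.rpow_natCast (3:ℝ) 2,
      ← Real.rpow_mul (by norm_num : (0:ℝ) ≤ 3)]
    norm_num
  have hsplit : ww = (3:ℝ) ^ ((1:ℝ)/3) * ((-12 + 7*Real.sqrt 3):ℝ) ^ ((1:ℝ)/3) := by
    rw [ww, show (-36 + 21*Real.sqrt 3 : ℝ) = 3 * (-12 + 7*Real.sqrt 3) by ring,
      Real.mul_rpow (by norm_num) hYpos.le]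
  have hy : (0:ℝ) < ((-12 + 7*Real.sqrt 3):ℝ) ^ ((1:ℝ)/3) := Real.rpow_pos_of_pos hYpos _
  have key : (9:ℝ)^((1:ℝ)/3) * ww = 3 * ((-12 + 7*Real.sqrt 3):ℝ) ^ ((1:ℝ)/3) := by
    rw [h9, hsplit, ← mul_assoc, ← Real.rpow_add (by norm_num : (0:ℝ) < 3)]
    norm_num
  have key2 : (2:ℝ) * (9:ℝ)^((1:ℝ)/3) / ((-12 + 7*Real.sqrt 3):ℝ)^((1:ℝ)/3) = 6/ww := by
    rw [div_eq_div_iff hy.ne' hwpos.ne']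
    linear_combination 2*key
  rw [b₁, key2, show ((-36 + 21*Real.sqrt 3):ℝ)^((1:ℝ)/3) = ww from rfl]

lemma hR : 7*b₁^3 - 27*b₁^2 + 81*b₁ + 243 = 0 := by
  have hw0 : ww ≠ 0 := ne_of_gt hwpos
  have hb' : 7*ww*b₁ = 6*ww^2 + 9*ww - 18 := by
    rw [hb1w]; field_simp; ring
  have key : 7*(6*ww^2+9*ww-18)^3 - 189*ww*(6*ww^2+9*ww-18)^2
      + 3969*ww^2*(6*ww^2+9*ww-18) + 83349*ww^3 = 0 := by
    linear_combination (1512*ww^3 + 54432 + 31752*Real.sqrt 3) * hw3 + 666792 * hs3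
  have key2 : 343*ww^3*(7*b₁^3 - 27*b₁^2 + 81*b₁ + 243) = 0 := by
    linear_combination (7*((7*ww*b₁)^2 + (7*ww*b₁)*(6*ww^2+9*ww-18) + (6*ww^2+9*ww-18)^2)
      - 189*ww*((7*ww*b₁)+(6*ww^2+9*ww-18)) + 3969*ww^2) * hb' + key
  have h343 : (343:ℝ)*ww^3 ≠ 0 := by positivity
  exact (mul_eq_zero.mp key2).resolve_left h343

lemma hb1_hi : b₁ < -1.6692488 := by
  by_contra hcon
  push_neg at hcon
  have hd : (0:ℝ) ≤ b₁ - (-1.6692488) := by linarith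
  nlinarith [hR, mul_nonneg hd (sq_nonneg (b₁ + (-1.6692488) - 18/7)),
    mul_nonneg hd (sq_nonneg (b₁ - (-1.6692488)))]

lemma hb1_lo : -1.6692489 < b₁ := by
  by_contra hcon
  push_neg at hcon
  have hd : (0:ℝ) ≤ (-1.6692489) - b₁ := by linarith
  nlinarith [hR, mul_nonneg hd (sq_nonneg (b₁ + (-1.6692489) - 18/7)),
    mul_nonneg hd (sq_nonneg (b₁ - (-1.6692489)))]

/-- the interior critical point -/
noncomputable def tst : ℝ := (b₁^2 - 18*b₁ - 27)/(-2*b₁^2 + 6*b₁)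

lemma hAneg : -2*b₁^2 + 6*b₁ < 0 := by nlinarith [hb1_hi, hb1_lo]

lemma ht' : (-2*b₁^2 + 6*b₁) * tst + (-b₁^2 + 18*b₁ + 27) = 0 := by
  have hA : (-2*b₁^2 + 6*b₁) ≠ 0 := ne_of_lt hAneg
  rw [tst, mul_comm, div_mul_cancel₀ _ hA]
  ring

lemma hE1 : 3*tst^2 + 2*b₁*tst + b₁ = 0 := by
  have h : (-2*b₁^2 + 6*b₁)^2 * (3*tst^2 + 2*b₁*tst + b₁) = 0 := by
    linear_combination (3*((-2*b₁^2 + 6*b₁)*tst) - 3*(-b₁^2 + 18*b₁ + 27)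
      + 2*b₁*(-2*b₁^2 + 6*b₁)) * ht' + (9*(b₁+1)) * hR
  have hA2 : ((-2*b₁^2 + 6*b₁))^2 ≠ 0 := pow_ne_zero _ (ne_of_lt hAneg)
  exact (mul_eq_zero.mp h).resolve_left hA2

lemma hE2 : tst^3 + b₁*tst^2 + b₁*tst + 3 + 2*b₁ = 0 := by
  have h : (-2*b₁^2 + 6*b₁)^3 * (tst^3 + b₁*tst^2 + b₁*tst + 3 + 2*b₁) = 0 := by
    linear_combination (((-2*b₁^2 + 6*b₁)*tst)^2 - (-b₁^2 + 18*b₁ + 27)*((-2*b₁^2 + 6*b₁)*tst)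
      + (-b₁^2 + 18*b₁ + 27)^2 + b₁*(-2*b₁^2 + 6*b₁)*((-2*b₁^2 + 6*b₁)*tst)
      - b₁*(-2*b₁^2 + 6*b₁)*(-b₁^2 + 18*b₁ + 27) + b₁*(-2*b₁^2 + 6*b₁)^2) * ht'
      + (-2*b₁^4 + 7*b₁^3 - 45*b₁^2 - 135*b₁ - 81) * hR
  have hA3 : ((-2*b₁^2 + 6*b₁))^3 ≠ 0 := pow_ne_zero _ (ne_of_lt hAneg)
  exact (mul_eq_zero.mp h).resolve_left hA3

lemma ht_hi : tst < -0.3741830 := by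
  have h := ht'
  nlinarith [hAneg, hb1_hi, hb1_lo, mul_pos (mul_pos (by norm_num : (0:ℝ) < 2) (by nlinarith [hb1_hi, hb1_lo] : (0:ℝ) < -b₁)) (by nlinarith [hb1_hi, hb1_lo] : (0:ℝ) < 3 - b₁)]

lemma ht_lo : -0.3741833 < tst := by
  have h := ht'
  nlinarith [hAneg, hb1_hi, hb1_lo, mul_pos (mul_pos (by norm_num : (0:ℝ) < 2) (by nlinarith [hb1_hi, hb1_lo] : (0:ℝ) < -b₁)) (by nlinarith [hb1_hi, hb1_lo] : (0:ℝ) < 3 - b₁)]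

/-- the one-variable bound: |t³+b₁t²+b₁t+1| ≤ M on [-1,1] -/
lemma gbound (t : ℝ) (h1 : -1 ≤ t) (h2 : t ≤ 1) :
    |t^3 + b₁*t^2 + b₁*t + 1| ≤ -2 - 2*b₁ := by
  rw [abs_le]
  constructor
  · -- g + M ≥ 0 : (t-1)(t²+(b₁+1)t+2b₁+1) ≥ 0
    have hq : t^2 + (b₁+1)*t + 2*b₁ + 1 ≤ 0 := by
      nlinarith [hb1_hi, mul_nonneg (sub_nonneg.mpr h1) (sub_nonneg.mpr h2),
        mul_nonpos_of_nonpos_of_nonneg (by nlinarith [hb1_hi] : b₁ + 1 ≤ 0) (by linarith : 0 ≤ t + 1)]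
    nlinarith [mul_nonneg (sub_nonneg.mpr h2) (neg_nonneg.mpr hq)]
  · -- M - g = (t - tst)²(ρ - t) ≥ 0
    have hfac : (-2 - 2*b₁) - (t^3 + b₁*t^2 + b₁*t + 1)
        = (t - tst)^2 * ((-b₁ - 2*tst) - t) := by
      linear_combination (-t - b₁/3) * hE1 + 2 * hE2 - (1/3) * ht'
    nlinarith [hfac, sq_nonneg (t - tst), ht_hi, hb1_hi,
      mul_nonneg (sq_nonneg (t - tst)) (by nlinarith [ht_hi, hb1_hi] : (0:ℝ) ≤ (-b₁ - 2*tst) - t)]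


lemma cubic_set_bdd (a b : ℝ) : BddAbove {r : ℝ | ∃ x y : ℝ, |x| ≤ 1 ∧ |y| ≤ 1 ∧
    r = |a * x^3 + b * x^2 * y + b * x * y^2 + a * y^3|} := by
  refine ⟨2 * |a| + 2 * |b|, ?_⟩
  rintro r ⟨x, y, hx, hy, rfl⟩
  have hx3 : |x|^3 ≤ 1 := pow_le_one₀ (abs_nonneg x) hx
  have hy3 : |y|^3 ≤ 1 := pow_le_one₀ (abs_nonneg y) hy
  have hx2y : |x|^2 * |y| ≤ 1 := by
    have := pow_le_one₀ (abs_nonneg x) hx (n := 2)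
    nlinarith [abs_nonneg x, abs_nonneg y]
  have hxy2 : |x| * |y|^2 ≤ 1 := by
    have := pow_le_one₀ (abs_nonneg y) hy (n := 2)
    nlinarith [abs_nonneg x, abs_nonneg y]
  calc |a * x^3 + b * x^2 * y + b * x * y^2 + a * y^3|
      ≤ |a * x^3 + b * x^2 * y + b * x * y^2| + |a * y^3| := abs_add_le _ _
    _ ≤ |a * x^3 + b * x^2 * y| + |b * x * y^2| + |a * y^3| := by
        gcongr; exact abs_add_le _ _
    _ ≤ |a * x^3| + |b * x^2 * y| + |b * x * y^2| + |a * y^3| := by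
        gcongr; exact abs_add_le _ _
    _ ≤ |a| * 1 + |b| * 1 + |b| * 1 + |a| * 1 := by
        gcongr
        · rw [abs_mul, abs_pow]; exact mul_le_mul_of_nonneg_left hx3 (abs_nonneg a)
        · rw [abs_mul, abs_mul, abs_pow, mul_assoc]
          exact mul_le_mul_of_nonneg_left hx2y (abs_nonneg b)
        · rw [abs_mul, abs_mul, abs_pow, mul_assoc]
          exact mul_le_mul_of_nonneg_left hxy2 (abs_nonneg b)
        · rw [abs_mul, abs_pow]; exact mul_le_mul_of_nonneg_left hy3 (abs_nonneg a)
    _ = 2 * |a| + 2 * |b| := by ring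

lemma le_supCubic (a b x y : ℝ) (hx : |x| ≤ 1) (hy : |y| ≤ 1) :
    |a * x^3 + b * x^2 * y + b * x * y^2 + a * y^3| ≤ supCubic a b :=
  le_csSup (cubic_set_bdd a b) ⟨x, y, hx, hy, rfl⟩

lemma supCubic_neg (a b : ℝ) : supCubic (-a) (-b) = supCubic a b := by
  unfold supCubic
  congr 1
  ext r
  constructor
  · rintro ⟨x, y, hx, hy, rfl⟩
    exact ⟨x, y, hx, hy, by rw [← abs_neg]; ring_nf⟩
  · rintro ⟨x, y, hx, hy, rfl⟩
    exact ⟨x, y, hx, hy, by rw [← abs_neg]; ring_nf⟩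

lemma hMpos : (0:ℝ) < -2 - 2*b₁ := by nlinarith [hb1_hi]

/-- two-variable bound via reduction to one variable -/
lemma Fbound : ∀ x y : ℝ, |x| ≤ 1 → |y| ≤ 1 → |x^3 + b₁*x^2*y + b₁*x*y^2 + y^3| ≤ -2 - 2*b₁ := by
  have key : ∀ x y : ℝ, |x| ≤ |y| → |y| ≤ 1 → |x^3 + b₁*x^2*y + b₁*x*y^2 + y^3| ≤ -2 - 2*b₁ := by
    intro x y hxy hy
    rcases eq_or_ne y 0 with hy0 | hy0
    · have hx0 : x = 0 := by
        have : |x| ≤ 0 := by rw [hy0] at hxy; simpa using hxy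
        exact abs_eq_zero.mp (le_antisymm this (abs_nonneg x))
      rw [hx0, hy0]
      simpa using hMpos.le
    · set t := x / y with htdef
      have ht : |t| ≤ 1 := by
        rw [htdef, abs_div]
        exact div_le_one_of_le₀ hxy (abs_nonneg y)
      have hsplit : x^3 + b₁*x^2*y + b₁*x*y^2 + y^3 = (t^3 + b₁*t^2 + b₁*t + 1) * y^3 := by
        rw [htdef]; field_simp
      rw [hsplit, abs_mul]
      have h1 : |t^3 + b₁*t^2 + b₁*t + 1| ≤ -2 - 2*b₁ :=
        gbound t (neg_le_of_abs_le ht) (le_of_abs_le ht)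
      have h2 : |y^3| ≤ 1 := by rw [abs_pow]; exact pow_le_one₀ (abs_nonneg y) hy
      calc |t^3 + b₁*t^2 + b₁*t + 1| * |y^3| ≤ (-2 - 2*b₁) * 1 :=
            mul_le_mul h1 h2 (abs_nonneg _) hMpos.le
        _ = -2 - 2*b₁ := by ring
  intro x y hx hy
  rcases le_total |x| |y| with h | h
  · exact key x y h hy
  · have := key y x h hx
    calc |x^3 + b₁*x^2*y + b₁*x*y^2 + y^3| = |y^3 + b₁*y^2*x + b₁*y*x^2 + x^3| := by ring_nf
    _ ≤ -2 - 2*b₁ := this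

lemma supCubic_1b1 : supCubic 1 b₁ = -2 - 2*b₁ := by
  apply IsGreatest.csSup_eq
  constructor
  · refine ⟨1, 1, by norm_num, by norm_num, ?_⟩
    rw [abs_of_nonpos (by nlinarith [hb1_hi] : 1*(1:ℝ)^3 + b₁*1^2*1 + b₁*1*1^2 + 1*1^3 ≤ 0)]
    ring
  · rintro r ⟨x, y, hx, hy, rfl⟩
    have := Fbound x y hx hy
    calc |1 * x^3 + b₁*x^2*y + b₁*x*y^2 + 1*y^3| = |x^3 + b₁*x^2*y + b₁*x*y^2 + y^3| := by ring_nf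
    _ ≤ -2 - 2*b₁ := this

lemma rpow23_cube {A : ℝ} (hA : 0 ≤ A) : (A ^ ((2:ℝ)/3))^3 = A^2 := by
  rw [← Real.rpow_natCast (A ^ ((2:ℝ)/3)) 3, ← Real.rpow_mul hA]
  norm_num

lemma rpow32_sq {A : ℝ} (hA : 0 ≤ A) : (A ^ ((3:ℝ)/2))^2 = A^3 := by
  rw [← Real.rpow_natCast (A ^ ((3:ℝ)/2)) 2, ← Real.rpow_mul hA]
  norm_num

lemma rpow23_le_of {A D : ℝ} (hA : 0 ≤ A) (hD : 0 ≤ D) (h : A^2 ≤ D^3) :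
    A ^ ((2:ℝ)/3) ≤ D := by
  have h3 : (A ^ ((2:ℝ)/3))^3 ≤ D^3 := by rw [rpow23_cube hA]; exact h
  exact le_of_pow_le_pow_left₀ (by norm_num) hD h3

lemma le_rpow23_of {A D : ℝ} (hA : 0 ≤ A) (hD : 0 ≤ D) (h : D^3 ≤ A^2) :
    D ≤ A ^ ((2:ℝ)/3) := by
  have h3 : D^3 ≤ (A ^ ((2:ℝ)/3))^3 := by rw [rpow23_cube hA]; exact h
  exact le_of_pow_le_pow_left₀ (by norm_num) (Real.rpow_nonneg hA _) h3

lemma rpow32_le_of {A D : ℝ} (hA : 0 ≤ A) (hD : 0 ≤ D) (h : A^3 ≤ D^2) :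
    A ^ ((3:ℝ)/2) ≤ D := by
  have h2 : (A ^ ((3:ℝ)/2))^2 ≤ D^2 := by rw [rpow32_sq hA]; exact h
  exact le_of_pow_le_pow_left₀ (by norm_num) hD h2

lemma le_rpow32_of {A D : ℝ} (hA : 0 ≤ A) (hD : 0 ≤ D) (h : D^2 ≤ A^3) :
    D ≤ A ^ ((3:ℝ)/2) := by
  have h2 : D^2 ≤ (A ^ ((3:ℝ)/2))^2 := by rw [rpow32_sq hA]; exact h
  exact le_of_pow_le_pow_left₀ (by norm_num) (Real.rpow_nonneg hA _) h2

noncomputable def N2 (x y : ℝ) : ℝ :=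
  (2 * |x| ^ ((3:ℝ)/2) + 2 * |y| ^ ((3:ℝ)/2)) ^ ((2:ℝ)/3)

lemma N2_base_nonneg (x y : ℝ) : 0 ≤ 2 * |x| ^ ((3:ℝ)/2) + 2 * |y| ^ ((3:ℝ)/2) := by
  positivity

lemma N2_nonneg (x y : ℝ) : 0 ≤ N2 x y := Real.rpow_nonneg (N2_base_nonneg x y) _

lemma N2_neg (x y : ℝ) : N2 (-x) (-y) = N2 x y := by simp [N2]

lemma N2_homog {c : ℝ} (hc : 0 ≤ c) (x y : ℝ) : N2 (c*x) (c*y) = c * N2 x y := by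
  unfold N2
  have habs : ∀ z : ℝ, |c*z| = c * |z| := fun z => by rw [abs_mul, abs_of_nonneg hc]
  rw [habs, habs, Real.mul_rpow hc (abs_nonneg x), Real.mul_rpow hc (abs_nonneg y),
    show 2 * (c ^ ((3:ℝ)/2) * |x| ^ ((3:ℝ)/2)) + 2 * (c ^ ((3:ℝ)/2) * |y| ^ ((3:ℝ)/2))
      = c ^ ((3:ℝ)/2) * (2 * |x| ^ ((3:ℝ)/2) + 2 * |y| ^ ((3:ℝ)/2)) by ring,
    Real.mul_rpow (Real.rpow_nonneg hc _) (N2_base_nonneg x y),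
    ← Real.rpow_mul hc]
  norm_num

lemma N2_add_le (x₁ y₁ x₂ y₂ : ℝ) : N2 (x₁+x₂) (y₁+y₂) ≤ N2 x₁ y₁ + N2 x₂ y₂ := by
  have hmink := Real.Lp_add_le (Finset.univ : Finset (Fin 2)) ![x₁, y₁] ![x₂, y₂]
    (p := (3:ℝ)/2) (by norm_num)
  simp only [Fin.sum_univ_two, Matrix.cons_val_zero, Matrix.cons_val_one, Matrix.head_cons] at hmink
  have h23 : (1:ℝ) / ((3:ℝ)/2) = (2:ℝ)/3 := by norm_num
  rw [h23] at hmink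
  have hsplit : ∀ u v : ℝ, N2 u v = (2:ℝ) ^ ((2:ℝ)/3) * (|u| ^ ((3:ℝ)/2) + |v| ^ ((3:ℝ)/2)) ^ ((2:ℝ)/3) := by
    intro u v
    unfold N2
    rw [show 2 * |u| ^ ((3:ℝ)/2) + 2 * |v| ^ ((3:ℝ)/2)
        = 2 * (|u| ^ ((3:ℝ)/2) + |v| ^ ((3:ℝ)/2)) by ring,
      Real.mul_rpow (by norm_num) (by positivity)]
  rw [hsplit, hsplit, hsplit, ← mul_add]
  have h2pos : (0:ℝ) ≤ (2:ℝ) ^ ((2:ℝ)/3) := Real.rpow_nonneg (by norm_num) _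
  exact mul_le_mul_of_nonneg_left hmink h2pos

lemma N2_one_zero : N2 1 0 = (2:ℝ) ^ ((2:ℝ)/3) := by
  unfold N2
  rw [abs_one, abs_zero, Real.one_rpow, Real.zero_rpow (by norm_num)]
  norm_num

lemma N2_zero_negone : N2 0 (-1) = (2:ℝ) ^ ((2:ℝ)/3) := by
  unfold N2
  rw [abs_zero, Real.zero_rpow (by norm_num), show |(-1:ℝ)| = 1 by simp, Real.one_rpow]
  norm_num

lemma h223 : (2:ℝ) ^ ((2:ℝ)/3) ≤ 1.5875 := by
  apply rpow23_le_of (by norm_num) (by norm_num)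
  norm_num

lemma N2_ten : N2 1 (-10) ≤ 16.3 := by
  have hZ : ((10:ℝ)) ^ ((3:ℝ)/2) ≤ 31.63 := by
    apply rpow32_le_of (by norm_num) (by norm_num); norm_num
  have hZ0 : (0:ℝ) ≤ ((10:ℝ)) ^ ((3:ℝ)/2) := Real.rpow_nonneg (by norm_num) _
  unfold N2
  rw [abs_one, Real.one_rpow, show |(-10:ℝ)| = 10 by norm_num]
  apply rpow23_le_of (by positivity) (by norm_num)
  nlinarith

noncomputable def CC : ℝ := (2 + 2 * |b₁| ^ ((3:ℝ)/2)) ^ ((2:ℝ)/3) / (2 * |1 + b₁|)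

lemma hb1neg : b₁ < 0 := by nlinarith [hb1_hi]

lemma habs_b1 : |b₁| = -b₁ := abs_of_neg hb1neg

lemma habs_1b1 : 2 * |1 + b₁| = -2 - 2*b₁ := by
  rw [abs_of_neg (by nlinarith [hb1_hi] : 1 + b₁ < 0)]; ring

lemma hcube_lo : (1.6692488:ℝ)^3 ≤ (-b₁)^3 := by
  apply pow_le_pow_left₀ (by norm_num)
  nlinarith [hb1_hi]

lemma hcube_hi : (-b₁)^3 ≤ (1.6692489:ℝ)^3 := by
  apply pow_le_pow_left₀ (by nlinarith [hb1_hi] : (0:ℝ) ≤ -b₁)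
  nlinarith [hb1_lo]

lemma hY_lo : 2.1566596 ≤ (-b₁) ^ ((3:ℝ)/2) := by
  apply le_rpow32_of (by nlinarith [hb1_hi] : (0:ℝ) ≤ -b₁) (by norm_num)
  nlinarith [hcube_lo]

lemma hY_hi : (-b₁) ^ ((3:ℝ)/2) ≤ 2.1566599 := by
  apply rpow32_le_of (by nlinarith [hb1_hi] : (0:ℝ) ≤ -b₁) (by norm_num)
  nlinarith [hcube_hi]

lemma hnum_lo : 3.4158999 ≤ (2 + 2 * |b₁| ^ ((3:ℝ)/2)) ^ ((2:ℝ)/3) := by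
  rw [habs_b1]
  apply le_rpow23_of (by nlinarith [hY_lo] : (0:ℝ) ≤ 2 + 2*(-b₁)^((3:ℝ)/2)) (by norm_num)
  nlinarith [hY_lo, hY_hi]

lemma hnum_hi : (2 + 2 * |b₁| ^ ((3:ℝ)/2)) ^ ((2:ℝ)/3) ≤ 3.4159005 := by
  rw [habs_b1]
  apply rpow23_le_of (by nlinarith [hY_lo] : (0:ℝ) ≤ 2 + 2*(-b₁)^((3:ℝ)/2)) (by norm_num)
  nlinarith [hY_lo, hY_hi]

lemma hCC_lo : 2.552 ≤ CC := by
  rw [CC, habs_1b1, le_div_iff₀ hMpos]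
  nlinarith [hnum_lo, hb1_hi, hb1_lo]

lemma hCC_hi : CC ≤ 2.5521 := by
  rw [CC, habs_1b1, div_le_iff₀ hMpos]
  nlinarith [hnum_hi, hb1_hi, hb1_lo]

lemma hN2_1b1 : N2 1 b₁ = CC * (-2 - 2*b₁) := by
  rw [CC, habs_1b1, div_mul_cancel₀ _ (ne_of_gt hMpos)]
  unfold N2
  rw [abs_one, Real.one_rpow]
  norm_num

lemma htabs : |tst| ≤ 1 := by
  rw [abs_le]; constructor <;> nlinarith [ht_lo, ht_hi]

lemma hp_lo : 0.9476 ≤ 1 + tst^3 := by nlinarith [ht_lo, ht_hi, sq_nonneg (tst + 0.3741833), sq_nonneg (tst + 0.3741830), sq_nonneg tst]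

lemma hq_pos : 0 < -tst - tst^2 := by nlinarith [ht_lo, ht_hi]

lemma hpq : (1 + tst^3) + (-tst - tst^2) * (-b₁) = -2 - 2*b₁ := by
  linear_combination hE2

lemma h223CP : (2:ℝ) ^ ((2:ℝ)/3) ≤ CC * (1 + tst^3) := by
  nlinarith [h223, hCC_lo, hp_lo]

lemma hCC_pos : 0 < CC := by linarith [hCC_lo]

lemma hpoint11 (a b : ℝ) : |2*a + 2*b| ≤ supCubic a b := by
  have h := le_supCubic a b 1 1 (by norm_num) (by norm_num)
  rw [show a*1^3 + b*1^2*1 + b*1*1^2 + a*1^3 = 2*a + 2*b by ring] at h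
  exact h

lemma hpoint_t (a b : ℝ) : |a*(1 + tst^3) + b*(tst + tst^2)| ≤ supCubic a b := by
  have h := le_supCubic a b 1 tst (by norm_num) htabs
  rw [show a*1^3 + b*1^2*tst + b*1*tst^2 + a*tst^3 = a*(1 + tst^3) + b*(tst + tst^2) by ring] at h
  exact h

lemma core_nonneg (a b : ℝ) (ha : 0 ≤ a) : N2 a b ≤ CC * supCubic a b := by
  rcases le_or_gt 0 b with hb | hb
  · -- b ≥ 0
    have step : N2 a b ≤ (a + b) * (2:ℝ) ^ ((2:ℝ)/3) := by
      calc N2 a b = N2 (a*1 + b*0) (a*0 + b*1) := by norm_num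
        _ ≤ N2 (a*1) (a*0) + N2 (b*0) (b*1) := N2_add_le _ _ _ _
        _ = a * N2 1 0 + b * N2 0 1 := by rw [N2_homog ha 1 0, N2_homog hb 0 1]
        _ = (a + b) * (2:ℝ) ^ ((2:ℝ)/3) := by
            rw [N2_one_zero]
            have : N2 0 1 = (2:ℝ) ^ ((2:ℝ)/3) := by
              rw [← N2_neg]; norm_num [N2_zero_negone]
            rw [this]; ring
    have habs : |2*a + 2*b| = 2*a + 2*b := abs_of_nonneg (by linarith)
    calc N2 a b ≤ (a + b) * (2:ℝ) ^ ((2:ℝ)/3) := step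
      _ ≤ CC * (2*a + 2*b) := by nlinarith [h223, hCC_lo]
      _ = CC * |2*a + 2*b| := by rw [habs]
      _ ≤ CC * supCubic a b := mul_le_mul_of_nonneg_left (hpoint11 a b) hCC_pos.le
  · -- b < 0
    rcases le_or_gt (-b) ((-b₁)*a) with hcase1 | h1
    · -- -b ≤ s₁ a : use the critical line
      obtain ⟨μ, hμdef⟩ : ∃ m : ℝ, m = b/b₁ := ⟨_, rfl⟩
      have hμb : μ * b₁ = b := by rw [hμdef]; exact div_mul_cancel₀ b (ne_of_lt hb1neg)
      have hμ0 : 0 ≤ μ := by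
        rw [hμdef, le_div_iff_of_neg hb1neg]
        nlinarith
      have hμa : μ ≤ a := by
        rw [hμdef, div_le_iff_of_neg hb1neg]
        nlinarith
      have e1 : (a-μ)*1 + μ*1 = a := by ring
      have e2 : (a-μ)*0 + μ*b₁ = b := by rw [mul_zero, zero_add, hμb]
      have hval : 0 ≤ a*(1 + tst^3) + b*(tst + tst^2) := by
        have : a*(1 + tst^3) + b*(tst + tst^2) = a*(1+tst^3) + (-b)*(-tst-tst^2) := by ring
        rw [this]
        have := hq_pos
        have := hp_lo
        nlinarith
      calc N2 a b = N2 ((a-μ)*1 + μ*1) ((a-μ)*0 + μ*b₁) := by rw [e1, e2]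
        _ ≤ N2 ((a-μ)*1) ((a-μ)*0) + N2 (μ*1) (μ*b₁) := N2_add_le _ _ _ _
        _ = (a-μ) * N2 1 0 + μ * N2 1 b₁ := by
            rw [N2_homog (by linarith : (0:ℝ) ≤ a - μ) 1 0, N2_homog hμ0 1 b₁]
        _ = (a-μ) * (2:ℝ) ^ ((2:ℝ)/3) + μ * (CC * (-2 - 2*b₁)) := by
            rw [N2_one_zero, hN2_1b1]
        _ ≤ (a-μ) * (CC * (1 + tst^3)) + μ * (CC * (-2 - 2*b₁)) := by
            have := mul_le_mul_of_nonneg_left h223CP (by linarith : (0:ℝ) ≤ a - μ)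
            linarith [this]
        _ = CC * (a*(1 + tst^3) + b*(tst + tst^2)) := by
            rw [← hpq]
            linear_combination (CC * (tst + tst^2)) * hμb
        _ = CC * |a*(1 + tst^3) + b*(tst + tst^2)| := by rw [abs_of_nonneg hval]
        _ ≤ CC * supCubic a b := mul_le_mul_of_nonneg_left (hpoint_t a b) hCC_pos.le
    · rcases le_or_gt (-b) (10*a) with hcase2 | h2
      · -- middle region
        have hden : (0:ℝ) < 10 + b₁ := by nlinarith [hb1_hi, hb1_lo]
        obtain ⟨μ, hμdef⟩ : ∃ m : ℝ, m = (-b + b₁*a)/(10 + b₁) := ⟨_, rfl⟩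
        have hμ10 : μ*(10 + b₁) = -b + b₁*a := by
          rw [hμdef]; exact div_mul_cancel₀ _ (ne_of_gt hden)
        have hμ0 : 0 ≤ μ := by
          rw [hμdef]
          apply div_nonneg _ hden.le
          nlinarith
        have hμa : μ ≤ a := by
          rw [hμdef, div_le_iff₀ hden]
          nlinarith
        have e1 : (a-μ)*1 + μ*1 = a := by ring
        have e2 : (a-μ)*b₁ + μ*(-10) = b := by linear_combination (-1) * hμ10
        have hval : 2*a + 2*b ≤ 0 := by nlinarith [hb1_hi]
        calc N2 a b = N2 ((a-μ)*1 + μ*1) ((a-μ)*b₁ + μ*(-10)) := by rw [e1, e2]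
          _ ≤ N2 ((a-μ)*1) ((a-μ)*b₁) + N2 (μ*1) (μ*(-10)) := N2_add_le _ _ _ _
          _ = (a-μ) * N2 1 b₁ + μ * N2 1 (-10) := by
              rw [N2_homog (by linarith : (0:ℝ) ≤ a - μ) 1 b₁, N2_homog hμ0 1 (-10)]
          _ ≤ (a-μ) * (CC * (-2 - 2*b₁)) + μ * (18 * CC) := by
              have h163 : N2 1 (-10) ≤ 18 * CC := by nlinarith [N2_ten, hCC_lo]
              have t1 := mul_le_mul_of_nonneg_left h163 hμ0
              rw [hN2_1b1]
              linarith [t1]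
          _ = CC * (-(2*a + 2*b)) := by linear_combination (2*CC) * hμ10
          _ = CC * |2*a + 2*b| := by rw [abs_of_nonpos hval]
          _ ≤ CC * supCubic a b := mul_le_mul_of_nonneg_left (hpoint11 a b) hCC_pos.le
      · -- far region
        have hval : 2*a + 2*b ≤ 0 := by nlinarith
        calc N2 a b = N2 (a*1 + (-b)*0) (a*0 + (-b)*(-1)) := by norm_num
          _ ≤ N2 (a*1) (a*0) + N2 ((-b)*0) ((-b)*(-1)) := N2_add_le _ _ _ _
          _ = a * N2 1 0 + (-b) * N2 0 (-1) := by
              rw [N2_homog ha 1 0, N2_homog (by linarith : (0:ℝ) ≤ -b) 0 (-1)]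
          _ = (a + (-b)) * (2:ℝ) ^ ((2:ℝ)/3) := by rw [N2_one_zero, N2_zero_negone]; ring
          _ ≤ CC * (-(2*a + 2*b)) := by nlinarith [h223, hCC_lo]
          _ = CC * |2*a + 2*b| := by rw [abs_of_nonpos hval]
          _ ≤ CC * supCubic a b := mul_le_mul_of_nonneg_left (hpoint11 a b) hCC_pos.le

lemma core (a b : ℝ) : N2 a b ≤ CC * supCubic a b := by
  rcases le_or_gt 0 a with ha | ha
  · exact core_nonneg a b ha
  · have h := core_nonneg (-a) (-b) (by linarith)
    rw [N2_neg, supCubic_neg] at h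
    exact h

theorem stmt12 :
    sSup {r : ℝ | ∃ a b : ℝ, ¬(a = 0 ∧ b = 0) ∧
        r = (2 * |a| ^ ((3:ℝ)/2) + 2 * |b| ^ ((3:ℝ)/2)) ^ ((2:ℝ)/3) / supCubic a b}
      = (2 + 2 * |b₁| ^ ((3:ℝ)/2)) ^ ((2:ℝ)/3) / (2 * |1 + b₁|) ∧
    (2 + 2 * |b₁| ^ ((3:ℝ)/2)) ^ ((2:ℝ)/3) / (2 * |1 + b₁|) ∈ Set.Ioo (2.55 : ℝ) 2.56 := by
  constructor
  · apply IsGreatest.csSup_eq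
    constructor
    · refine ⟨1, b₁, fun h => one_ne_zero h.1, ?_⟩
      rw [supCubic_1b1, habs_1b1]
      norm_num [abs_one, Real.one_rpow]
    · rintro r ⟨a, b, hab, rfl⟩
      have hφpos : 0 < N2 a b := by
        apply Real.rpow_pos_of_pos
        rcases not_and_or.mp hab with h | h
        · have h1 : 0 < |a| := abs_pos.mpr h
          have h32 : 0 < |a| ^ ((3:ℝ)/2) := Real.rpow_pos_of_pos h1 _
          have h32' : 0 ≤ |b| ^ ((3:ℝ)/2) := Real.rpow_nonneg (abs_nonneg b) _
          nlinarith
        · have h1 : 0 < |b| := abs_pos.mpr h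
          have h32 : 0 < |b| ^ ((3:ℝ)/2) := Real.rpow_pos_of_pos h1 _
          have h32' : 0 ≤ |a| ^ ((3:ℝ)/2) := Real.rpow_nonneg (abs_nonneg a) _
          nlinarith
      have hcore := core a b
      have hsup : 0 < supCubic a b := by nlinarith [hCC_lo, hCC_hi]
      rw [show (2 * |a| ^ ((3:ℝ)/2) + 2 * |b| ^ ((3:ℝ)/2)) ^ ((2:ℝ)/3) = N2 a b from rfl,
        show (2 + 2 * |b₁| ^ ((3:ℝ)/2)) ^ ((2:ℝ)/3) / (2 * |1 + b₁|) = CC from rfl,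
        div_le_iff₀ hsup]
      exact hcore
  · rw [show (2 + 2 * |b₁| ^ ((3:ℝ)/2)) ^ ((2:ℝ)/3) / (2 * |1 + b₁|) = CC from rfl, Set.mem_Ioo]
    constructor
    · linarith [hCC_lo]
    · linarith [hCC_hi]
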